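/- arXiv:2408.14182 — 3 statements merged into one kernel-verified Lean document; each statement's English description precedes it below -/
import Mathlib

section
/- For every integer n ≥ 1, one has −1/W(n) ≤ E_n/E_{n−1} − e^{W(n)} ≤ 0. -/
open Real

/-- Principal branch of the Lambert W function on `[0, ∞)`: for `x ≥ 0`,
`lambertW x` is the unique `y ≥ 0` with `y * exp y = x`. -/
noncomputable def lambertW (x : ℝ) : ℝ := Function.invFun (fun y : ℝ => y * Real.exp y) x

/-- `E n = n! * exp(e^R - 1) / (R^n * sqrt(2π(n+1)(R+1)))` with `R = W(n+1)`. -/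
noncomputable def E (n : ℕ) : ℝ :=
  (Nat.factorial n : ℝ) * Real.exp (Real.exp (lambertW (n + 1)) - 1) /
    ((lambertW (n + 1)) ^ n * Real.sqrt (2 * Real.pi * (n + 1) * (lambertW (n + 1) + 1)))

lemma fW_mono : StrictMonoOn (fun y : ℝ => y * Real.exp y) (Set.Ioi (-1)) := by
  apply strictMonoOn_of_deriv_pos (convex_Ioi _)
  · exact (continuous_id.mul Real.continuous_exp).continuousOn
  · intro x hx
    have h : HasDerivAt (fun y : ℝ => y * Real.exp y) (1 * Real.exp x + x * Real.exp x) x :=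
      (hasDerivAt_id x).mul (Real.hasDerivAt_exp x)
    rw [interior_Ioi, Set.mem_Ioi] at hx
    rw [h.deriv]
    nlinarith [Real.exp_pos x]

lemma lambertW_spec {x : ℝ} (hx : 0 ≤ x) :
    lambertW x * Real.exp (lambertW x) = x := by
  have hxx : x ≤ x * Real.exp x := by nlinarith [Real.one_le_exp hx]
  have h0 : (0:ℝ) ≤ x * Real.exp x := le_trans hx hxx
  have hmem : x ∈ Set.Icc ((fun y : ℝ => y * Real.exp y) 0) ((fun y : ℝ => y * Real.exp y) x) := by
    simp only [Set.mem_Icc]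
    constructor
    · simpa using hx
    · simpa using hxx
  rcases intermediate_value_Icc hx ((continuous_id.mul Real.continuous_exp).continuousOn) hmem
    with ⟨y, _, hy⟩
  have hy' : y * Real.exp y = x := by simpa using hy
  have hfe : (fun y : ℝ => y * Real.exp y) (Function.invFun (fun y : ℝ => y * Real.exp y) x) = x :=
    Function.invFun_eq (f := fun y : ℝ => y * Real.exp y) ⟨y, hy'⟩
  simpa [lambertW] using hfe

lemma lambertW_nonneg {x : ℝ} (hx : 0 ≤ x) : 0 ≤ lambertW x := by
  have h := lambertW_spec hx
  by_contra hneg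
  push_neg at hneg
  nlinarith [Real.exp_pos (lambertW x)]

lemma lambertW_le {x y : ℝ} (hx : 0 ≤ x) (hy : 0 ≤ y) (h : x ≤ y * Real.exp y) :
    lambertW x ≤ y := by
  by_contra hlt
  push_neg at hlt
  have := fW_mono (Set.mem_Ioi.mpr (by linarith : (-1:ℝ) < y))
    (Set.mem_Ioi.mpr (by nlinarith [lambertW_nonneg hx])) hlt
  simp only at this
  rw [lambertW_spec hx] at this
  linarith

lemma le_lambertW {x y : ℝ} (hy : 0 ≤ y) (h : y * Real.exp y ≤ x) :
    y ≤ lambertW x := by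
  have hx : 0 ≤ x := le_trans (by positivity) h
  by_contra hlt
  push_neg at hlt
  have := fW_mono (Set.mem_Ioi.mpr (by nlinarith [lambertW_nonneg hx]))
    (Set.mem_Ioi.mpr (by linarith : (-1:ℝ) < y)) hlt
  simp only at this
  rw [lambertW_spec hx] at this
  linarith

lemma lambertW_mono {x y : ℝ} (hx : 0 ≤ x) (h : x ≤ y) : lambertW x ≤ lambertW y := by
  refine le_lambertW (lambertW_nonneg hx) ?_
  rw [lambertW_spec hx]; exact h

lemma lambertW_pos {x : ℝ} (hx : 0 < x) : 0 < lambertW x := by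
  rcases lt_or_eq_of_le (lambertW_nonneg hx.le) with h | h
  · exact h
  · exfalso; have := lambertW_spec hx.le; rw [← h] at this; simp at this; linarith

lemma lambertW_exp_eq {x : ℝ} (hx : 0 < x) : Real.exp (lambertW x) = x / lambertW x := by
  have h := lambertW_spec hx.le
  field_simp [ne_of_gt (lambertW_pos hx)]
  linarith

-- derivative
lemma lambertW_hasDerivAt {x : ℝ} (hx : 0 < x) :
    HasDerivAt lambertW (lambertW x / (x * (1 + lambertW x))) x := by
  set w := lambertW x with hw
  have hwpos : 0 < w := lambertW_pos hx
  have hspec : w * Real.exp w = x := lambertW_spec hx.le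
  have hf : HasStrictDerivAt (fun y : ℝ => y * Real.exp y) ((1 + w) * Real.exp w) w := by
    have h : HasStrictDerivAt (fun y : ℝ => y * Real.exp y) (1 * Real.exp w + id w * Real.exp w) w :=
      (hasStrictDerivAt_id w).mul (Real.hasStrictDerivAt_exp w)
    convert h using 1
    simp [id]; ring
  have hf' : (1 + w) * Real.exp w ≠ 0 := by positivity
  have hF := hf.hasStrictFDerivAt_equiv hf'
  set g : ℝ → ℝ := hF.localInverse _ _ _ with hg
  have hinv : HasStrictDerivAt g ((1 + w) * Real.exp w)⁻¹ x := by
    have h := hf.to_localInverse hf'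
    rw [hspec] at h
    exact h
  have hcont : ContinuousAt g x := by
    have h := hF.localInverse_continuousAt
    rw [hspec] at h
    exact h
  have hright : ∀ᶠ y in nhds x, (fun y : ℝ => y * Real.exp y) (g y) = y := by
    have h := hF.eventually_right_inverse
    rw [hspec] at h
    exact h
  have hgx : g x = w := by
    have h := hF.localInverse_apply_image
    rw [hspec] at h
    exact h
  have heq : ∀ᶠ y in nhds x, g y = lambertW y := by
    have h1 : ∀ᶠ y in nhds x, 0 < g y := by
      have h : ∀ᶠ y in nhds x, g y ∈ Set.Ioi (0:ℝ) :=
        hcont.eventually_mem (by rw [hgx]; exact Ioi_mem_nhds hwpos)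
      simpa using h
    have h2 : ∀ᶠ y in nhds x, 0 < y := eventually_gt_nhds hx
    filter_upwards [h1, h2, hright] with y hy1 hy2 hy3
    have hly : lambertW y * Real.exp (lambertW y) = y := lambertW_spec hy2.le
    have he : (fun y : ℝ => y * Real.exp y) (g y) = (fun y : ℝ => y * Real.exp y) (lambertW y) := by
      simp only; rw [hly]; simpa using hy3
    exact fW_mono.injOn (Set.mem_Ioi.mpr (by linarith))
      (Set.mem_Ioi.mpr (by nlinarith [lambertW_nonneg hy2.le])) he
  have hd : HasDerivAt lambertW ((1 + w) * Real.exp w)⁻¹ x :=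
    (Filter.EventuallyEq.hasDerivAt_iff heq).mp hinv.hasDerivAt
  convert hd using 1
  have hexp : Real.exp w = x / w := lambertW_exp_eq hx
  rw [hexp]
  have h1 : (1:ℝ) + w > 0 := by linarith
  rw [eq_comm, inv_eq_iff_eq_inv, eq_comm, inv_div]
  field_simp

lemma exp_half_le : Real.exp 0.5 ≤ 2 := by
  nlinarith [Real.exp_one_lt_d9, Real.exp_pos (0.5:ℝ), Real.exp_pos (1:ℝ),
    (by rw [← Real.exp_add]; norm_num : Real.exp 0.5 * Real.exp 0.5 = Real.exp 1)]

lemma lambertW_one_ge : 0.5 ≤ lambertW 1 := by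
  apply le_lambertW (by norm_num)
  nlinarith [exp_half_le, Real.exp_pos (0.5:ℝ)]

lemma lambertW_one_le : lambertW 1 ≤ 0.6 := by
  apply lambertW_le (by norm_num) (by norm_num)
  have h : (1.2:ℝ) ≤ Real.exp 0.2 := by
    have := Real.add_one_le_exp (0.2:ℝ); linarith
  have h3 : (1.2:ℝ)^3 ≤ (Real.exp 0.2)^3 := by
    apply pow_le_pow_left₀ (by norm_num) h
  have he : (Real.exp 0.2)^3 = Real.exp 0.6 := by
    rw [← Real.exp_nat_mul]; norm_num
  nlinarith [Real.exp_pos (0.6:ℝ)]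

lemma exp_p7_le : Real.exp 0.7 ≤ 15/7 := by
  have h1 : Real.exp 0.0875 ≤ 1/0.9125 := by
    have h := Real.add_one_le_exp (-0.0875 : ℝ)
    rw [Real.exp_neg] at h
    rw [le_div_iff₀ (by norm_num)]
    have hp := Real.exp_pos (0.0875:ℝ)
    have h2 : (0.9125:ℝ) ≤ (Real.exp 0.0875)⁻¹ := by linarith
    calc Real.exp 0.0875 * 0.9125 ≤ Real.exp 0.0875 * (Real.exp 0.0875)⁻¹ := by
          apply mul_le_mul_of_nonneg_left h2 hp.le
      _ = 1 := mul_inv_cancel₀ (ne_of_gt hp)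
  have he : (Real.exp 0.0875)^8 = Real.exp 0.7 := by
    rw [← Real.exp_nat_mul]; norm_num
  have h8 : (Real.exp 0.0875)^8 ≤ (1/0.9125)^8 :=
    pow_le_pow_left₀ (Real.exp_pos _).le h1 8
  rw [he] at h8
  calc Real.exp 0.7 ≤ (1/0.9125)^8 := h8
    _ ≤ 15/7 := by norm_num

lemma lambertW_15_ge : 0.7 ≤ lambertW 1.5 := by
  apply le_lambertW (by norm_num)
  nlinarith [exp_p7_le, Real.exp_pos (0.7:ℝ)]

lemma lambertW_two_ge : 0.7 ≤ lambertW 2 := by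
  refine le_trans lambertW_15_ge (lambertW_mono (by norm_num) (by norm_num))

lemma lambertW_ge_one {x : ℝ} (hx : 3 ≤ x) : 1 ≤ lambertW x := by
  apply le_lambertW (by norm_num)
  have := Real.exp_one_lt_d9
  nlinarith

noncomputable def psi (x : ℝ) : ℝ :=
  Real.exp (lambertW x) - 1 - (x - 1) * Real.log (lambertW x) -
    (Real.log (2 * Real.pi) + Real.log x + Real.log (lambertW x + 1)) / 2

noncomputable def psiD (x : ℝ) : ℝ :=
  - Real.log (lambertW x) +
    (1 - lambertW x - (lambertW x)^2) / (2 * x * (1 + lambertW x)^2)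

lemma psi_hasDerivAt {x : ℝ} (hx : 0 < x) : HasDerivAt psi (psiD x) x := by
  set w := lambertW x with hwdef
  have hwpos : 0 < w := lambertW_pos hx
  have hspec : w * Real.exp w = x := lambertW_spec hx.le
  have hw : HasDerivAt lambertW (w / (x * (1 + w))) x := lambertW_hasDerivAt hx
  set w' := w / (x * (1 + w)) with hw'def
  have h1 : HasDerivAt (fun y => Real.exp (lambertW y)) (Real.exp w * w') x := hw.exp
  have h2 : HasDerivAt (fun y => (y - 1) * Real.log (lambertW y))
      (1 * Real.log w + (x - 1) * (w' / w)) x := by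
    exact ((hasDerivAt_id x).sub_const 1).mul (hw.log (ne_of_gt hwpos))
  have h3 : HasDerivAt (fun y : ℝ => Real.log y) x⁻¹ x := Real.hasDerivAt_log (ne_of_gt hx)
  have h4 : HasDerivAt (fun y => Real.log (lambertW y + 1)) (w' / (w + 1)) x := by
    exact (hw.add_const 1).log (by positivity)
  have h5 : HasDerivAt (fun y => Real.log (2 * Real.pi) + Real.log y + Real.log (lambertW y + 1))
      (x⁻¹ + w' / (w + 1)) x := by
    simpa [Pi.add_def] using ((hasDerivAt_const x (Real.log (2*Real.pi))).add h3).add h4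
  have hD : HasDerivAt psi
      (Real.exp w * w' - (1 * Real.log w + (x - 1) * (w' / w)) - (x⁻¹ + w' / (w + 1)) / 2) x := by
    exact ((h1.sub_const 1).sub h2).sub (h5.div_const 2)
  convert hD using 1
  have hexp : Real.exp w = x / w := lambertW_exp_eq hx
  rw [psiD, hw'def, hexp, ← hwdef]
  have h1w : (0:ℝ) < 1 + w := by linarith
  field_simp
  ring

lemma E_eq (n : ℕ) : E n = (Nat.factorial n : ℝ) * Real.exp (psi (n + 1)) := by
  have hx : (0:ℝ) < (n:ℝ) + 1 := by positivity
  set R := lambertW ((n:ℝ) + 1) with hR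
  have hRpos : 0 < R := lambertW_pos hx
  have hpow : (R : ℝ) ^ n = Real.exp ((n : ℝ) * Real.log R) := by
    rw [← Real.log_pow, Real.exp_log (by positivity)]
  have harg : (0:ℝ) < 2 * Real.pi * ((n:ℝ) + 1) * (R + 1) := by
    have := Real.pi_pos; positivity
  have hsqrt : Real.sqrt (2 * Real.pi * ((n:ℝ) + 1) * (R + 1)) =
      Real.exp ((Real.log (2 * Real.pi) + Real.log ((n:ℝ) + 1) + Real.log (R + 1)) / 2) := by
    rw [show Real.log (2 * Real.pi) + Real.log ((n:ℝ) + 1) + Real.log (R + 1)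
        = Real.log (2 * Real.pi * ((n:ℝ) + 1) * (R + 1)) by
      rw [Real.log_mul (by positivity) (by positivity), Real.log_mul (by positivity) (by positivity),
        Real.log_mul (by positivity) (by positivity),
        Real.log_mul (by positivity) (by positivity)]]
    rw [← Real.log_sqrt harg.le, Real.exp_log (Real.sqrt_pos.mpr harg)]
  rw [E, psi, ← hR, hpow, hsqrt]
  rw [div_eq_iff (by positivity), mul_assoc, ← Real.exp_add, ← Real.exp_add]
  congr 1
  ring

lemma psi_mvt {a b : ℝ} (ha : 1 ≤ a) (hab : a < b) :
    ∃ c ∈ Set.Ioo a b, psi b - psi a = (b - a) * psiD c := by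
  have hcont : ContinuousOn psi (Set.Icc a b) := by
    intro x hx
    exact (psi_hasDerivAt (lt_of_lt_of_le (by linarith) hx.1)).continuousAt.continuousWithinAt
  have hderiv : ∀ x ∈ Set.Ioo a b, HasDerivAt psi (psiD x) x :=
    fun x hx => psi_hasDerivAt (lt_of_lt_of_le (by linarith [hx.1]) le_rfl)
  rcases exists_hasDerivAt_eq_slope psi psiD hab hcont hderiv with ⟨c, hc, hceq⟩
  refine ⟨c, hc, ?_⟩
  have hne : b - a ≠ 0 := ne_of_gt (by linarith : (0:ℝ) < b - a)
  rw [hceq]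
  field_simp

lemma c_nonpos {ξ : ℝ} (hξ : 0 < ξ) (h : 0.7 ≤ lambertW ξ) :
    (1 - lambertW ξ - (lambertW ξ)^2) / (2 * ξ * (1 + lambertW ξ)^2) ≤ 0 := by
  apply div_nonpos_of_nonpos_of_nonneg
  · nlinarith
  · positivity

lemma c_ge {ξ : ℝ} (hξ : 0 < ξ) (hw : 0 ≤ lambertW ξ) :
    -(1 / (2 * ξ)) ≤ (1 - lambertW ξ - (lambertW ξ)^2) / (2 * ξ * (1 + lambertW ξ)^2) := by
  set w := lambertW ξ
  rw [neg_div' , div_le_div_iff₀ (by positivity) (by positivity)]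
  nlinarith

lemma log_ratio_ge {a b : ℝ} (ha : 0 < a) (hab : a ≤ b) :
    1 - a / b ≤ Real.log b - Real.log a := by
  have hb : 0 < b := lt_of_lt_of_le ha hab
  have h := Real.log_le_sub_one_of_pos (show 0 < a / b by positivity)
  rw [Real.log_div (ne_of_gt ha) (ne_of_gt hb)] at h
  linarith

lemma log_ratio_le {a b : ℝ} (ha : 0 < a) (hab : a ≤ b) :
    Real.log b - Real.log a ≤ (b - a) / a := by
  have hb : 0 < b := lt_of_lt_of_le ha hab
  have h := Real.log_le_sub_one_of_pos (show 0 < b / a by positivity)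
  rw [Real.log_div (ne_of_gt hb) (ne_of_gt ha)] at h
  have : b / a - 1 = (b - a) / a := by field_simp
  linarith

-- convexity consequence: W(x+1) - W(x) ≤ W(x)/(x (1 + W(x)))
lemma lambertW_diff_le {x : ℝ} (hx : 0 < x) :
    lambertW (x + 1) - lambertW x ≤ lambertW x / (x * (1 + lambertW x)) := by
  set a := lambertW x with hadef
  set b := lambertW (x + 1) with hbdef
  have ha : 0 < a := lambertW_pos hx
  have hab : a ≤ b := lambertW_mono hx.le (by linarith)
  have hsa : a * Real.exp a = x := lambertW_spec hx.le
  have hsb : b * Real.exp b = x + 1 := lambertW_spec (by linarith)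
  have hm : Real.exp b = Real.exp a * Real.exp (b - a) := by
    rw [← Real.exp_add]; ring_nf
  have h1 : 1 + (b - a) ≤ Real.exp (b - a) := by
    have := Real.add_one_le_exp (b - a); linarith
  have hea := Real.exp_pos a
  have key : (b - a) * ((1 + a) * Real.exp a) ≤ 1 := by
    have h2 : b * Real.exp b - a * Real.exp a = 1 := by rw [hsa, hsb]; ring
    nlinarith [sq_nonneg (b - a), mul_nonneg (mul_nonneg (sub_nonneg.mpr hab) hea.le)
      (sub_nonneg.mpr h1), mul_nonneg ha.le hea.le]
  have hden : 0 < (1 + a) * Real.exp a := by positivity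
  have h3 : b - a ≤ 1 / ((1 + a) * Real.exp a) := by
    rw [le_div_iff₀ hden]; exact key
  have hexp : Real.exp a = x / a := lambertW_exp_eq hx
  calc b - a ≤ 1 / ((1 + a) * Real.exp a) := h3
    _ = a / (x * (1 + a)) := by rw [hexp]; field_simp

lemma psiD_eq (ξ : ℝ) : psiD ξ = - Real.log (lambertW ξ) +
    (1 - lambertW ξ - (lambertW ξ)^2) / (2 * ξ * (1 + lambertW ξ)^2) := rfl

-- upper bound for n ≥ 2
lemma Delta_le_two {n : ℕ} (hn : 2 ≤ n) :
    psi ((n:ℝ) + 1) - psi n ≤ - Real.log (lambertW n) := by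
  have hn1 : (1:ℝ) ≤ (n:ℝ) := by exact_mod_cast le_trans (by norm_num) hn
  have hn2 : (2:ℝ) ≤ (n:ℝ) := by exact_mod_cast hn
  obtain ⟨ξ, hξ, heq⟩ := psi_mvt hn1 (by linarith : (n:ℝ) < (n:ℝ) + 1)
  have hξpos : (0:ℝ) < ξ := by linarith [hξ.1]
  have hwξ : 0.7 ≤ lambertW ξ := le_trans lambertW_two_ge
    (lambertW_mono (by norm_num) (by linarith [hξ.1]))
  have hlog : Real.log (lambertW (n:ℝ)) ≤ Real.log (lambertW ξ) :=
    Real.log_le_log (lambertW_pos (by linarith)) (lambertW_mono (by linarith) hξ.1.le)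
  have hc := c_nonpos hξpos hwξ
  rw [heq]
  have : ((n:ℝ) + 1 - n) = 1 := by ring
  rw [this, one_mul, psiD_eq]
  linarith

-- upper bound for n = 1
lemma Delta_le_one : psi 2 - psi 1 ≤ - Real.log (lambertW 1) := by
  obtain ⟨ξ₁, hξ₁, heq₁⟩ := psi_mvt (le_refl 1) (by norm_num : (1:ℝ) < 1.5)
  obtain ⟨ξ₂, hξ₂, heq₂⟩ := psi_mvt (by norm_num : (1:ℝ) ≤ 1.5) (by norm_num : (1.5:ℝ) < 2)
  have hξ₁pos : (0:ℝ) < ξ₁ := by linarith [hξ₁.1]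
  have hξ₂pos : (0:ℝ) < ξ₂ := by linarith [hξ₂.1]
  have hw1 : 0.5 ≤ lambertW 1 := lambertW_one_ge
  have hw1' : lambertW 1 ≤ 0.6 := lambertW_one_le
  have hw15 : 0.7 ≤ lambertW 1.5 := lambertW_15_ge
  -- bound on ξ₁
  have hwξ₁ : lambertW 1 ≤ lambertW ξ₁ := lambertW_mono (by norm_num) hξ₁.1.le
  have hb1 : psiD ξ₁ ≤ - Real.log (lambertW 1) + 1/18 := by
    rw [psiD_eq]
    have hlog : Real.log (lambertW 1) ≤ Real.log (lambertW ξ₁) :=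
      Real.log_le_log (lambertW_pos one_pos) hwξ₁
    have hc : (1 - lambertW ξ₁ - (lambertW ξ₁)^2) / (2 * ξ₁ * (1 + lambertW ξ₁)^2) ≤ 1/18 := by
      have hwn : 0 ≤ lambertW ξ₁ := lambertW_nonneg hξ₁pos.le
      rw [div_le_iff₀ (by positivity)]
      have hw : 0.5 ≤ lambertW ξ₁ := by linarith
      have hξ : 1 ≤ ξ₁ := hξ₁.1.le
      nlinarith [mul_nonneg (by linarith : (0:ℝ) ≤ lambertW ξ₁ - 0.5)
        (by linarith : (0:ℝ) ≤ lambertW ξ₁ + 1.6), sq_nonneg (1 + lambertW ξ₁),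
        mul_nonneg (by linarith : (0:ℝ) ≤ ξ₁ - 1) (sq_nonneg (1 + lambertW ξ₁))]
    linarith
  -- bound on ξ₂
  have hwξ₂ : lambertW 1.5 ≤ lambertW ξ₂ := lambertW_mono (by norm_num) hξ₂.1.le
  have hb2 : psiD ξ₂ ≤ - Real.log (lambertW 1.5) := by
    rw [psiD_eq]
    have hlog : Real.log (lambertW 1.5) ≤ Real.log (lambertW ξ₂) :=
      Real.log_le_log (lambertW_pos (by norm_num)) hwξ₂
    have hc := c_nonpos hξ₂pos (by linarith)
    linarith
  -- log gap
  have hgap : 1/7 ≤ Real.log (lambertW 1.5) - Real.log (lambertW 1) := by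
    have := log_ratio_ge (lambertW_pos one_pos) (lambertW_mono (by norm_num) (by norm_num) :
      lambertW 1 ≤ lambertW 1.5)
    have hq : lambertW 1 / lambertW 1.5 ≤ 6/7 := by
      rw [div_le_iff₀ (by linarith)]
      linarith
    linarith
  have htot : psi 2 - psi 1 = 0.5 * psiD ξ₂ + 0.5 * psiD ξ₁ := by
    have e1 : (1.5 - 1 : ℝ) = 0.5 := by norm_num
    have e2 : (2 - 1.5 : ℝ) = 0.5 := by norm_num
    rw [e1] at heq₁; rw [e2] at heq₂
    linarith
  rw [htot]
  nlinarith [hb1, hb2, hgap]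

lemma Delta_ge {n : ℕ} (hn : 2 ≤ n) :
    Real.log ((n:ℝ) - 1) - Real.log (n:ℝ) - Real.log (lambertW n) ≤
      psi ((n:ℝ) + 1) - psi n := by
  have hn2 : (2:ℝ) ≤ (n:ℝ) := by exact_mod_cast hn
  have hnpos : (0:ℝ) < (n:ℝ) := by linarith
  set a := lambertW (n:ℝ) with hadef
  set b := lambertW ((n:ℝ) + 1) with hbdef
  have ha : 0 < a := lambertW_pos hnpos
  have hab : a ≤ b := lambertW_mono hnpos.le (by linarith)
  have ha7 : 0.7 ≤ a := le_trans lambertW_two_ge (lambertW_mono (by norm_num) hn2)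
  obtain ⟨ξ, hξ, heq⟩ := psi_mvt (by linarith : (1:ℝ) ≤ (n:ℝ)) (by linarith : (n:ℝ) < (n:ℝ) + 1)
  have hξpos : (0:ℝ) < ξ := by linarith [hξ.1]
  have hwξpos : 0 < lambertW ξ := lambertW_pos hξpos
  -- psiD ξ ≥ -log b - 1/(2n)
  have hlog : Real.log (lambertW ξ) ≤ Real.log b :=
    Real.log_le_log hwξpos (lambertW_mono hξpos.le (by linarith [hξ.2]))
  have hc : -(1 / (2 * (n:ℝ))) ≤
      (1 - lambertW ξ - (lambertW ξ)^2) / (2 * ξ * (1 + lambertW ξ)^2) := by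
    refine le_trans ?_ (c_ge hξpos hwξpos.le)
    rw [neg_le_neg_iff]
    apply div_le_div_of_nonneg_left (by norm_num) (by positivity)
    linarith [hξ.1]
  have hpsiD : - Real.log b - 1 / (2 * (n:ℝ)) ≤ psiD ξ := by
    rw [psiD_eq]; linarith
  -- log b - log a ≤ 1/(n(1+a))
  have hdiff : b - a ≤ a / ((n:ℝ) * (1 + a)) := by
    have := lambertW_diff_le hnpos
    rwa [← hadef, ← hbdef] at this
  have hlogab : Real.log b - Real.log a ≤ 1 / ((n:ℝ) * (1 + a)) := by
    have h1 := log_ratio_le ha hab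
    have h2 : (b - a) / a ≤ 1 / ((n:ℝ) * (1 + a)) := by
      rw [div_le_div_iff₀ ha (by positivity)]
      have h3 : (b - a) * ((n:ℝ) * (1 + a)) ≤ (a / ((n:ℝ) * (1 + a))) * ((n:ℝ) * (1 + a)) := by
        apply mul_le_mul_of_nonneg_right hdiff (by positivity)
      rw [div_mul_cancel₀ _ (by positivity : ((n:ℝ) * (1 + a)) ≠ 0)] at h3
      linarith
    linarith
  -- log n - log (n-1) ≥ 1/n
  have hlogn : 1 / (n:ℝ) ≤ Real.log (n:ℝ) - Real.log ((n:ℝ) - 1) := by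
    have := log_ratio_ge (show (0:ℝ) < (n:ℝ) - 1 by linarith) (by linarith : (n:ℝ) - 1 ≤ (n:ℝ))
    have hq : ((n:ℝ) - 1) / (n:ℝ) = 1 - 1/(n:ℝ) := by field_simp
    rw [hq] at this
    linarith
  -- combine
  rw [heq]
  have hone : ((n:ℝ) + 1 - n) = 1 := by ring
  rw [hone, one_mul]
  -- it suffices: 1/(n(1+a)) + 1/(2n) ≤ log n - log(n-1)
  have hmain : 1 / ((n:ℝ) * (1 + a)) + 1 / (2 * (n:ℝ)) ≤
      Real.log (n:ℝ) - Real.log ((n:ℝ) - 1) := by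
    rcases eq_or_lt_of_le hn2 with h2 | h3
    · -- n = 2
      have hb2 : 1 / ((n:ℝ) * (1 + a)) ≤ 1 / 3.4 := by
        apply div_le_div_of_nonneg_left (by norm_num) (by norm_num)
        nlinarith
      have hlog2 : Real.log ((n:ℝ)) - Real.log ((n:ℝ) - 1) = Real.log 2 := by
        rw [← h2]; norm_num
      rw [hlog2]
      have hl2 := Real.log_two_gt_d9
      have h14 : 1 / (2 * (n:ℝ)) = 1 / 4 := by rw [← h2]; norm_num
      rw [h14]
      linarith [hb2]
    · -- n ≥ 3
      have hn3 : (3:ℝ) ≤ (n:ℝ) := by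
        have : (2:ℕ) < n := by exact_mod_cast h3
        exact_mod_cast this
      have ha1 : 1 ≤ a := lambertW_ge_one hn3
      have : 1 / ((n:ℝ) * (1 + a)) ≤ 1 / (2 * (n:ℝ)) := by
        apply div_le_div_of_nonneg_left (by norm_num) (by positivity)
        nlinarith
      have h1n : 1 / (2*(n:ℝ)) + 1 / (2*(n:ℝ)) = 1/(n:ℝ) := by
        rw [← add_div]
        rw [eq_div_iff (by positivity : (n:ℝ) ≠ 0)]
        field_simp
        norm_num
      linarith
  linarith [hpsiD, hlogab, hmain]

theorem stmt_9 (n : ℕ) (hn : 1 ≤ n) :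
    -1 / lambertW n ≤ E n / E (n - 1) - Real.exp (lambertW n) ∧
      E n / E (n - 1) - Real.exp (lambertW n) ≤ 0 := by
  have hnpos : (0:ℝ) < (n:ℝ) := by exact_mod_cast hn
  have hr : 0 < lambertW (n:ℝ) := lambertW_pos hnpos
  have hrexp : Real.exp (lambertW (n:ℝ)) = (n:ℝ) / lambertW (n:ℝ) := lambertW_exp_eq hnpos
  have hcast : ((n - 1 : ℕ) : ℝ) = (n:ℝ) - 1 := by
    push_cast [Nat.cast_sub hn]; ring
  have hE1 : E (n-1) = (Nat.factorial (n-1) : ℝ) * Real.exp (psi (n:ℝ)) := by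
    rw [E_eq, hcast]; norm_num
  have hfac : (Nat.factorial n : ℝ) = (n:ℝ) * (Nat.factorial (n-1) : ℝ) := by
    exact_mod_cast (Nat.mul_factorial_pred (by omega)).symm
  have hf0 : (0:ℝ) < (Nat.factorial (n-1) : ℝ) := by exact_mod_cast Nat.factorial_pos _
  have hratio : E n / E (n - 1) = (n:ℝ) * Real.exp (psi ((n:ℝ)+1) - psi (n:ℝ)) := by
    rw [E_eq n, hE1, hfac, Real.exp_sub]
    field_simp
  -- upper bound on Delta
  have hup : psi ((n:ℝ)+1) - psi (n:ℝ) ≤ - Real.log (lambertW (n:ℝ)) := by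
    rcases eq_or_lt_of_le hn with h1 | h2
    · have hone : (n:ℝ) = 1 := by exact_mod_cast h1.symm
      rw [hone]
      have := Delta_le_one
      norm_num at this ⊢
      exact this
    · exact Delta_le_two (by omega)
  have hexpup : Real.exp (psi ((n:ℝ)+1) - psi (n:ℝ)) ≤ (lambertW (n:ℝ))⁻¹ := by
    calc Real.exp (psi ((n:ℝ)+1) - psi (n:ℝ)) ≤ Real.exp (- Real.log (lambertW (n:ℝ))) :=
          Real.exp_le_exp.mpr hup
      _ = (lambertW (n:ℝ))⁻¹ := by rw [Real.exp_neg, Real.exp_log hr]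
  have h4 : ((n:ℝ) - 1) / lambertW (n:ℝ) ≤ (n:ℝ) * Real.exp (psi ((n:ℝ)+1) - psi (n:ℝ)) := by
    rcases eq_or_lt_of_le hn with h1 | h2
    · have hone : (n:ℝ) = 1 := by exact_mod_cast h1.symm
      have hz : ((n:ℝ) - 1) / lambertW (n:ℝ) = 0 := by rw [hone]; simp
      rw [hz]; positivity
    · have hn2 : (2:ℕ) ≤ n := h2
      have hn2' : (2:ℝ) ≤ (n:ℝ) := by exact_mod_cast hn2
      have hlow := Delta_ge hn2
      have hexplow : ((n:ℝ) - 1) / ((n:ℝ) * lambertW (n:ℝ)) ≤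
          Real.exp (psi ((n:ℝ)+1) - psi (n:ℝ)) := by
        have h := Real.exp_le_exp.mpr hlow
        rwa [Real.exp_sub, Real.exp_sub, Real.exp_log (by linarith : (0:ℝ) < (n:ℝ) - 1),
          Real.exp_log hnpos, Real.exp_log hr, div_div] at h
      have hmul : (n:ℝ) * (((n:ℝ) - 1) / ((n:ℝ) * lambertW (n:ℝ))) =
          ((n:ℝ) - 1) / lambertW (n:ℝ) := by
        field_simp
      calc ((n:ℝ) - 1) / lambertW (n:ℝ) = (n:ℝ) * (((n:ℝ) - 1) / ((n:ℝ) * lambertW (n:ℝ))) :=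
            hmul.symm
        _ ≤ (n:ℝ) * Real.exp (psi ((n:ℝ)+1) - psi (n:ℝ)) := by
            apply mul_le_mul_of_nonneg_left hexplow (by positivity)
  constructor
  · -- lower bound
    rw [hratio, hrexp]
    have h5 : ((n:ℝ) - 1) / lambertW (n:ℝ) = (n:ℝ) / lambertW (n:ℝ) - 1 / lambertW (n:ℝ) := by
      ring
    have h6 : -1 / lambertW (n:ℝ) = -(1 / lambertW (n:ℝ)) := by ring
    rw [h6]
    linarith
  · -- upper bound
    rw [hratio, hrexp]
    have h7 : (n:ℝ) * Real.exp (psi ((n:ℝ)+1) - psi (n:ℝ)) ≤ (n:ℝ) * (lambertW (n:ℝ))⁻¹ :=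
      mul_le_mul_of_nonneg_left hexpup (by positivity)
    have h8 : (n:ℝ) * (lambertW (n:ℝ))⁻¹ = (n:ℝ) / lambertW (n:ℝ) := by ring
    linarith [h7, h8.le, h8.ge]
end

section
/- The sequence B_n^{1/n} / ((1/e)·n/ln n) converges to 1 as n → ∞. -/
/-- Bell numbers: `Bell 0 = 1` and `Bell (n+1) = ∑_{k=0}^{n} C(n,k) * Bell k`. -/
def Bell : ℕ → ℕ
  | 0 => 1
  | n + 1 => ∑ k ∈ (Finset.range (n + 1)).attach, (n.choose k.1) * Bell k.1
decreasing_by exact Finset.mem_range.mp k.2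

open Real Filter

lemma exp_tsum (x : ℝ) : Real.exp x = ∑' k : ℕ, x ^ k / k.factorial := by
  rw [Real.exp_eq_exp_ℝ, NormedSpace.exp_eq_tsum_div]

lemma pow_le_exp_mul (n k : ℕ) : (k : ℝ) ^ n ≤ n.factorial * Real.exp k := by
  have h : ((k:ℝ)) ^ n / n.factorial ≤ Real.exp k := by
    calc ((k:ℝ))^n / n.factorial ≤ ∑ i ∈ Finset.range (n+1), (k:ℝ)^i / i.factorial := by
          exact Finset.single_le_sum (f := fun i => (k:ℝ)^i / i.factorial)
            (fun i _ => by positivity) (Finset.self_mem_range_succ n)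
      _ ≤ Real.exp k := Real.sum_le_exp_of_nonneg (by positivity) _
  have hn : (0:ℝ) < n.factorial := by positivity
  calc ((k:ℝ))^n = n.factorial * ((k:ℝ)^n / n.factorial) := by field_simp
    _ ≤ n.factorial * Real.exp k := by nlinarith [Real.exp_pos (k:ℝ)]

lemma summable_D (n : ℕ) : Summable (fun k : ℕ => (k:ℝ) ^ n / k.factorial) := by
  have hs : Summable (fun k : ℕ => (n.factorial : ℝ) * (Real.exp 1 ^ k / k.factorial)) :=
    (Real.summable_pow_div_factorial (Real.exp 1)).mul_left _
  have hle : ∀ k : ℕ, (k:ℝ) ^ n / k.factorial ≤ n.factorial * (Real.exp 1 ^ k / k.factorial) := by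
    intro k
    have h1 : Real.exp 1 ^ k = Real.exp k := by rw [← Real.exp_nat_mul]; ring_nf
    have hk : (0:ℝ) < k.factorial := by positivity
    rw [h1, ← mul_div_assoc]
    gcongr
    exact pow_le_exp_mul n k
  exact Summable.of_nonneg_of_le (fun k => by positivity) hle hs

lemma D_succ (n : ℕ) : (∑' k : ℕ, (k:ℝ)^(n+1) / k.factorial)
    = ∑ i ∈ Finset.range (n+1), (n.choose i : ℝ) * ∑' k : ℕ, (k:ℝ)^i / k.factorial := by
  have h0 : (∑' k : ℕ, (k:ℝ)^(n+1) / k.factorial)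
      = ∑' k : ℕ, ((k:ℝ)+1)^n / k.factorial := by
    rw [Summable.tsum_eq_zero_add (summable_D (n+1))]
    simp only [Nat.cast_zero, zero_pow (Nat.succ_ne_zero n), zero_div, zero_add]
    congr 1; funext k
    have hfac : ((k+1).factorial : ℝ) = (k+1) * k.factorial := by
      push_cast [Nat.factorial_succ]; ring
    rw [hfac]
    push_cast
    have hk1 : ((k:ℝ)+1) ≠ 0 := by positivity
    have hkf : ((k.factorial:ℝ)) ≠ 0 := by positivity
    field_simp
    ring
  rw [h0]
  have h1 : ∀ k : ℕ, ((k:ℝ)+1)^n / k.factorial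
      = ∑ i ∈ Finset.range (n+1), (n.choose i : ℝ) * ((k:ℝ)^i / k.factorial) := by
    intro k
    rw [add_pow]
    rw [Finset.sum_div]
    congr 1; funext i
    ring
  simp_rw [h1]
  rw [Summable.tsum_finsetSum (fun i _ => (summable_D i).mul_left _)]
  congr 1; funext i
  rw [tsum_mul_left]

lemma Bell_succ (n : ℕ) : Bell (n+1) = ∑ i ∈ Finset.range (n+1), n.choose i * Bell i := by
  rw [Bell]
  exact Finset.sum_attach _ (fun i => n.choose i * Bell i)

lemma dobinski (n : ℕ) : Real.exp 1 * Bell n = ∑' k : ℕ, (k:ℝ)^n / k.factorial := by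
  induction n using Nat.strong_induction_on with
  | _ n ih =>
    match n with
    | 0 =>
      have := exp_tsum 1
      simp only [one_pow] at this
      simp only [Bell, Nat.cast_one, mul_one, pow_zero]
      exact this
    | n+1 =>
      rw [D_succ, Bell_succ]
      push_cast
      rw [Finset.mul_sum]
      refine Finset.sum_congr rfl (fun i hi => ?_)
      rw [← ih i (Finset.mem_range.mp hi)]
      ring

lemma bell_lower (n k : ℕ) : (k:ℝ)^n / k.factorial ≤ Real.exp 1 * Bell n := by
  rw [dobinski]
  exact Summable.le_tsum (summable_D n) k (fun j _ => by positivity)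

lemma bell_pos (n : ℕ) : (0:ℝ) < Bell n := by
  have h := bell_lower n 1
  simp only [Nat.cast_one, one_pow, Nat.factorial_one, Nat.cast_one, div_one] at h
  nlinarith [Real.exp_pos (1:ℝ), Real.add_one_le_exp (1:ℝ)]

lemma bell_upper (n : ℕ) (hn : 1 ≤ n) (a : ℝ) (ha : 0 < a) :
    Real.exp 1 * Bell n ≤ Real.exp (Real.exp (a*n)) / (Real.exp n * a^n) := by
  rw [dobinski]
  have hpt : ∀ k : ℕ, (k:ℝ)^n / k.factorial
      ≤ (Real.exp (a*n))^k / k.factorial / (Real.exp n * a^n) := by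
    intro k
    rcases Nat.eq_zero_or_pos k with rfl | hk
    · simp only [Nat.cast_zero, zero_pow (by omega : n ≠ 0), zero_div]
      positivity
    · have hk0 : (0:ℝ) < k := by exact_mod_cast hk
      have hlog : Real.log k ≤ a * k - 1 - Real.log a := by
        have := Real.log_le_sub_one_of_pos (mul_pos ha hk0)
        rw [Real.log_mul (ne_of_gt ha) (ne_of_gt hk0)] at this
        linarith
      have hkn : (k:ℝ)^n = Real.exp (n * Real.log k) := by
        rw [← Real.log_pow, Real.exp_log (by positivity)]
      have h2 : (n:ℝ) * Real.log k ≤ a * n * k - n - n * Real.log a := by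
        have hn0 : (0:ℝ) ≤ n := by positivity
        nlinarith
      have h3 : (k:ℝ)^n ≤ (Real.exp (a*n))^k / (Real.exp n * a^n) := by
        have hapow : (a:ℝ)^n = Real.exp (n * Real.log a) := by
          rw [← Real.log_pow, Real.exp_log (by positivity)]
        rw [hkn, ← Real.exp_nat_mul, le_div_iff₀ (by positivity), hapow,
          ← Real.exp_add, ← Real.exp_add]
        apply Real.exp_le_exp.mpr
        push_cast
        nlinarith
      calc (k:ℝ)^n / k.factorial ≤ ((Real.exp (a*n))^k / (Real.exp n * a^n)) / k.factorial := by
            gcongr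
        _ = (Real.exp (a*n))^k / k.factorial / (Real.exp n * a^n) := by ring
  have hsum : Summable (fun k : ℕ => (Real.exp (a*n))^k / k.factorial / (Real.exp n * a^n)) :=
    (Real.summable_pow_div_factorial _).div_const _
  calc (∑' k : ℕ, (k:ℝ)^n / k.factorial)
      ≤ ∑' k : ℕ, (Real.exp (a*n))^k / k.factorial / (Real.exp n * a^n) :=
        Summable.tsum_le_tsum hpt (summable_D n) hsum
    _ = (∑' k : ℕ, (Real.exp (a*n))^k / k.factorial) / (Real.exp n * a^n) := by
        rw [tsum_div_const]
    _ = Real.exp (Real.exp (a*n)) / (Real.exp n * a^n) := by rw [← exp_tsum]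

lemma log_bell_lower (n k : ℕ) (hk : 1 ≤ k) :
    (n:ℝ) * Real.log k - k * Real.log k - 1 ≤ Real.log (Bell n) := by
  have hk0 : (0:ℝ) < k := by exact_mod_cast hk
  have h := bell_lower n k
  have hpos : (0:ℝ) < (k:ℝ)^n / k.factorial := by positivity
  have hlog := Real.log_le_log hpos h
  rw [Real.log_div (by positivity) (by positivity), Real.log_pow,
    Real.log_mul (Real.exp_ne_zero 1) (ne_of_gt (bell_pos n)), Real.log_exp] at hlog
  have hfact : Real.log (k.factorial : ℝ) ≤ k * Real.log k := by
    calc Real.log (k.factorial : ℝ) ≤ Real.log ((k:ℝ)^k) := by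
          apply Real.log_le_log (by positivity)
          exact_mod_cast Nat.factorial_le_pow k
      _ = k * Real.log k := Real.log_pow k k
  linarith
lemma log_bell_upper (n : ℕ) (hn : 1 ≤ n) (a : ℝ) (ha : 0 < a) :
    Real.log (Bell n) ≤ Real.exp (a*n) - n - n * Real.log a - 1 := by
  have h := bell_upper n hn a ha
  have hlog := Real.log_le_log (mul_pos (Real.exp_pos 1) (bell_pos n)) h
  rw [Real.log_mul (Real.exp_ne_zero 1) (ne_of_gt (bell_pos n)), Real.log_exp,
    Real.log_div (Real.exp_ne_zero _) (by positivity),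
    Real.log_exp, Real.log_mul (Real.exp_ne_zero _) (by positivity),
    Real.log_exp, Real.log_pow] at hlog
  linarith

noncomputable def g (n : ℕ) : ℝ :=
  Real.log (Bell n) / n - (Real.log n - Real.log (Real.log n) - 1)

lemma basic (n : ℕ) (hn : 3 ≤ n) :
    (1:ℝ) ≤ Real.log n ∧ (3:ℝ) ≤ (n:ℝ) := by
  have h3 : (3:ℝ) ≤ (n:ℝ) := by exact_mod_cast hn
  refine ⟨?_, h3⟩
  have : Real.exp 1 ≤ 3 := by
    have := Real.exp_one_lt_d9
    linarith
  calc (1:ℝ) = Real.log (Real.exp 1) := (Real.log_exp 1).symm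
    _ ≤ Real.log n := Real.log_le_log (Real.exp_pos 1) (by linarith)

lemma g_lower (n : ℕ) (hn : 3 ≤ n) : -((Real.log n + 1)/n) ≤ g n := by
  obtain ⟨hln, h3⟩ := basic n hn
  have hn0 : (0:ℝ) < n := by linarith
  have hlnpos : (0:ℝ) < Real.log n := by linarith
  have hx : (0:ℝ) < (n:ℝ)/Real.log n := by positivity
  set k : ℕ := ⌈(n:ℝ)/Real.log n⌉₊ with hkdef
  have hk1 : 1 ≤ k := Nat.one_le_ceil_iff.mpr hx
  have hklb : (n:ℝ)/Real.log n ≤ k := Nat.le_ceil _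
  have hkub : (k:ℝ) ≤ (n:ℝ)/Real.log n + 1 := (Nat.ceil_lt_add_one hx.le).le
  have hkn : (k:ℝ) ≤ n := by
    have : k ≤ n := Nat.ceil_le.mpr (div_le_self hn0.le hln)
    exact_mod_cast this
  have hk0 : (0:ℝ) < k := by exact_mod_cast hk1
  have hlogk_lb : Real.log n - Real.log (Real.log n) ≤ Real.log k := by
    calc Real.log n - Real.log (Real.log n) = Real.log ((n:ℝ)/Real.log n) :=
          (Real.log_div (ne_of_gt hn0) (ne_of_gt hlnpos)).symm
      _ ≤ Real.log k := Real.log_le_log hx hklb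
  have hlogk_ub : Real.log k ≤ Real.log n := Real.log_le_log hk0 hkn
  have hlogk0 : (0:ℝ) ≤ Real.log k := Real.log_nonneg (by exact_mod_cast hk1)
  have hklogk : (k:ℝ) * Real.log k ≤ (n:ℝ) + Real.log n := by
    have h := mul_le_mul hkub hlogk_ub hlogk0 (by positivity)
    have heq : ((n:ℝ)/Real.log n + 1) * Real.log n = (n:ℝ) + Real.log n := by
      field_simp
    linarith
  have hlb := log_bell_lower n k hk1
  have p1 : (n:ℝ) * (Real.log n - Real.log (Real.log n)) ≤ (n:ℝ) * Real.log k :=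
    mul_le_mul_of_nonneg_left hlogk_lb hn0.le
  have h1 : (n:ℝ) * (Real.log n - Real.log (Real.log n)) - ((n:ℝ) + Real.log n) - 1
      ≤ Real.log (Bell n) := by linarith
  have h2 : ((n:ℝ) * (Real.log n - Real.log (Real.log n)) - ((n:ℝ) + Real.log n) - 1) / n
      ≤ Real.log (Bell n) / n := by gcongr
  have h3' : ((n:ℝ) * (Real.log n - Real.log (Real.log n)) - ((n:ℝ) + Real.log n) - 1) / n
      = (Real.log n - Real.log (Real.log n)) - 1 - (Real.log n + 1)/n := by
    field_simp
    ring
  unfold g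
  linarith [h2, h3'.symm ▸ h2]

noncomputable def u (n : ℕ) : ℝ :=
  1/Real.log n - 1/(n:ℝ) + Real.log (Real.log n)
    - Real.log (Real.log n - Real.log (Real.log n))

lemma g_upper (n : ℕ) (hn : 3 ≤ n) : g n ≤ u n := by
  obtain ⟨hln, h3⟩ := basic n hn
  have hn0 : (0:ℝ) < n := by linarith
  have hlnpos : (0:ℝ) < Real.log n := by linarith
  have hq1 : (1:ℝ) < (n:ℝ)/Real.log n := by
    rw [lt_div_iff₀ hlnpos, one_mul]
    have := Real.log_le_sub_one_of_pos hn0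
    linarith
  set a : ℝ := Real.log ((n:ℝ)/Real.log n) / n with hadef
  have hlq : (0:ℝ) < Real.log ((n:ℝ)/Real.log n) := Real.log_pos hq1
  have ha : 0 < a := by positivity
  have han : a * n = Real.log ((n:ℝ)/Real.log n) := by
    rw [hadef]
    field_simp
  have hexp : Real.exp (a*n) = (n:ℝ)/Real.log n := by
    rw [han, Real.exp_log (by positivity)]
  have hquot : Real.log ((n:ℝ)/Real.log n) = Real.log n - Real.log (Real.log n) :=
    Real.log_div (ne_of_gt hn0) (ne_of_gt hlnpos)
  have hla : Real.log a = Real.log (Real.log n - Real.log (Real.log n)) - Real.log n := by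
    rw [hadef, Real.log_div (ne_of_gt hlq) (ne_of_gt hn0), hquot]
  have hub := log_bell_upper n (by omega) a ha
  rw [hexp, hla] at hub
  have h2 : Real.log (Bell n) / n
      ≤ ((n:ℝ)/Real.log n - n - n * (Real.log (Real.log n - Real.log (Real.log n)) - Real.log n) - 1)/n := by
    gcongr
  have h3' : ((n:ℝ)/Real.log n - n - n * (Real.log (Real.log n - Real.log (Real.log n)) - Real.log n) - 1)/n
      = 1/Real.log n - 1 - Real.log (Real.log n - Real.log (Real.log n)) + Real.log n - 1/n := by
    field_simp
    ring
  unfold g u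
  linarith [h3'.symm ▸ h2]

lemma tendsto_logn : Tendsto (fun n : ℕ => Real.log n) atTop atTop :=
  Real.tendsto_log_atTop.comp tendsto_natCast_atTop_atTop

lemma u_tendsto : Tendsto u atTop (nhds 0) := by
  have a1 : Tendsto (fun n : ℕ => 1/Real.log n) atTop (nhds 0) := by
    simpa [one_div, Function.comp_def] using tendsto_inv_atTop_zero.comp tendsto_logn
  have a2 : Tendsto (fun n : ℕ => 1/(n:ℝ)) atTop (nhds 0) :=
    tendsto_one_div_atTop_nhds_zero_nat
  have a3 : Tendsto (fun n : ℕ => Real.log (Real.log n) / Real.log n) atTop (nhds 0) :=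
    (Real.isLittleO_log_id_atTop.tendsto_div_nhds_zero).comp tendsto_logn
  have a4 : Tendsto (fun n : ℕ => 1 - Real.log (Real.log n) / Real.log n) atTop (nhds 1) := by
    simpa using (tendsto_const_nhds (x := (1:ℝ))).sub a3
  have a5 : Tendsto (fun n : ℕ => Real.log (1 - Real.log (Real.log n) / Real.log n)) atTop (nhds 0) := by
    have := ((Real.continuousAt_log (by norm_num : (1:ℝ) ≠ 0)).tendsto).comp a4
    simpa [Function.comp, Function.comp_def, Real.log_one] using this
  have heq : ∀ᶠ n : ℕ in atTop, 1/Real.log n - 1/(n:ℝ)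
      - Real.log (1 - Real.log (Real.log n) / Real.log n) = u n := by
    filter_upwards [eventually_ge_atTop 3] with n hn
    obtain ⟨hln, h3⟩ := basic n hn
    have hlnpos : (0:ℝ) < Real.log n := by linarith
    have hll : Real.log (Real.log n) < Real.log n := by
      have := Real.log_le_sub_one_of_pos hlnpos
      linarith
    have hkey : Real.log (1 - Real.log (Real.log n) / Real.log n)
        = Real.log (Real.log n - Real.log (Real.log n)) - Real.log (Real.log n) := by
      have hrw : 1 - Real.log (Real.log n) / Real.log n
          = (Real.log n - Real.log (Real.log n)) / Real.log n := by
        field_simp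
      rw [hrw, Real.log_div (by intro hc; linarith) (ne_of_gt hlnpos)]
    rw [hkey]
    unfold u
    ring
  have := (a1.sub a2).sub a5
  rw [show (0:ℝ) - 0 - 0 = 0 by ring] at this
  exact this.congr' heq

lemma ell_tendsto : Tendsto (fun n : ℕ => -((Real.log n + 1)/(n:ℝ))) atTop (nhds 0) := by
  have a6 : Tendsto (fun n : ℕ => Real.log n / (n:ℝ)) atTop (nhds 0) :=
    (Real.isLittleO_log_id_atTop.tendsto_div_nhds_zero).comp tendsto_natCast_atTop_atTop
  have a2 : Tendsto (fun n : ℕ => 1/(n:ℝ)) atTop (nhds 0) :=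
    tendsto_one_div_atTop_nhds_zero_nat
  have := (a6.add a2).neg
  rw [show -((0:ℝ) + 0) = 0 by ring] at this
  refine this.congr (fun n => ?_)
  rw [add_div]

lemma g_tendsto : Tendsto g atTop (nhds 0) := by
  refine tendsto_of_tendsto_of_tendsto_of_le_of_le' ell_tendsto u_tendsto ?_ ?_
  · filter_upwards [eventually_ge_atTop 3] with n hn using g_lower n hn
  · filter_upwards [eventually_ge_atTop 3] with n hn using g_upper n hn

theorem stmt_17 :
    Filter.Tendsto
      (fun n : ℕ => (Bell n : ℝ) ^ ((1 : ℝ) / n) / ((1 / Real.exp 1) * (n : ℝ) / Real.log n))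
      Filter.atTop (nhds 1) := by
  have hmain : Tendsto (fun n : ℕ => Real.exp (g n)) atTop (nhds 1) := by
    have := (Real.continuous_exp.tendsto 0).comp g_tendsto
    simpa [Function.comp_def] using this
  refine hmain.congr' ?_
  filter_upwards [eventually_ge_atTop 3] with n hn
  obtain ⟨hln, h3⟩ := basic n hn
  have hn0 : (0:ℝ) < n := by linarith
  have hlnpos : (0:ℝ) < Real.log n := by linarith
  have hb : (Bell n : ℝ) ^ ((1:ℝ)/n) = Real.exp (Real.log (Bell n) / n) := by
    rw [Real.rpow_def_of_pos (bell_pos n)]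
    ring_nf
  have hd : (1 / Real.exp 1) * (n:ℝ) / Real.log n
      = Real.exp (Real.log n - Real.log (Real.log n) - 1) := by
    rw [Real.exp_sub, Real.exp_sub, Real.exp_log hn0, Real.exp_log hlnpos]
    ring
  rw [hb, hd, ← Real.exp_sub]
  rfl
end

section
/- Let n ≥ 1 be an integer, R = W(n+1), and let ε be a real number with 0 < ε < 1/2 and R ≥ 5. Define the complex number J = (n!/(2πi)) · ∫_{t=√(R²−ε²)}^{R} [exp(e^{t−iε} − 1)/(t−iε)^{n+1} − exp(e^{t+iε} − 1)/(t+iε)^{n+1}] dt. Then |J/E_n| ≤ exp(e^R·(cos ε − 1) − (R/2)·(1 − ε²)). -/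
lemma term_bound (n : ℕ) (R ε t : ℝ) (hR : 0 < R) (hRt : R^2 ≤ t^2 + ε^2) :
    ‖Complex.exp (Complex.exp ((t:ℂ) + (ε:ℂ)*Complex.I) - 1) /
        ((t:ℂ)+(ε:ℂ)*Complex.I)^(n+1)‖
      ≤ Real.exp (Real.exp t * Real.cos ε - 1) / R^(n+1) := by
  have habs : R ≤ ‖(t:ℂ) + (ε:ℂ)*Complex.I‖ := by
    rw [Complex.norm_def]
    rw [show Complex.normSq ((t:ℂ) + (ε:ℂ)*Complex.I) = t^2 + ε^2 by
      simp [Complex.normSq_apply]; ring]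
    exact Real.le_sqrt' hR |>.mpr hRt
  rw [norm_div, norm_pow, Complex.norm_exp]
  have hre : (Complex.exp ((t:ℂ) + (ε:ℂ)*Complex.I) - 1).re = Real.exp t * Real.cos ε - 1 := by
    simp [Complex.exp_re]
  rw [hre]
  exact div_le_div_of_nonneg_left (Real.exp_nonneg _) (pow_pos hR _)
    (pow_le_pow_left₀ hR.le habs _)

lemma int_exp (c s R : ℝ) (hc : c ≠ 0) :
    ∫ t in s..R, Real.exp t * Real.exp (c * Real.exp t - 1)
      = (Real.exp (c*Real.exp R - 1) - Real.exp (c*Real.exp s - 1))/c := by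
  have H : ∀ x : ℝ, HasDerivAt (fun t => c⁻¹ * Real.exp (c * Real.exp t - 1))
      (Real.exp x * Real.exp (c * Real.exp x - 1)) x := by
    intro x
    have h1 : HasDerivAt (fun t => c * Real.exp t - 1) (c * Real.exp x) x :=
      ((Real.hasDerivAt_exp x).const_mul c).sub_const 1
    have h2 := (Real.hasDerivAt_exp (c * Real.exp x - 1)).comp x h1
    have h3 := h2.const_mul c⁻¹
    refine h3.congr_deriv ?_
    field_simp
  rw [intervalIntegral.integral_eq_sub_of_hasDerivAt (fun x _ => H x)
    (((Real.continuous_exp).mul (Real.continuous_exp.comp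
      (by continuity : Continuous fun t : ℝ => c * Real.exp t - 1))).intervalIntegrable s R)]
  field_simp

set_option maxHeartbeats 2000000 in
theorem stmt_18 (n : ℕ) (hn : 1 ≤ n) (ε : ℝ) (hε0 : 0 < ε) (hε : ε < 1 / 2)
    (R : ℝ) (hR : R = lambertW (n + 1)) (hR5 : 5 ≤ R)
    (J : ℂ)
    (hJ : J = (Nat.factorial n : ℂ) / (2 * Real.pi * Complex.I) *
        ∫ t in Real.sqrt (R ^ 2 - ε ^ 2)..R,
          (Complex.exp (Complex.exp ((t : ℂ) - (ε : ℂ) * Complex.I) - 1) /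
              ((t : ℂ) - (ε : ℂ) * Complex.I) ^ (n + 1) -
            Complex.exp (Complex.exp ((t : ℂ) + (ε : ℂ) * Complex.I) - 1) /
              ((t : ℂ) + (ε : ℂ) * Complex.I) ^ (n + 1))) :
    ‖J / (E n : ℂ)‖ ≤
      Real.exp (Real.exp R * (Real.cos ε - 1) - R / 2 * (1 - ε ^ 2)) := by
  have hπ := Real.pi_gt_d6
  have hπpos := Real.pi_pos
  set s := Real.sqrt (R ^ 2 - ε ^ 2) with hsdef
  set c := Real.cos ε with hcdef
  have hRpos : (0:ℝ) < R := by linarith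
  have hre2 : (0:ℝ) ≤ R^2 - ε^2 := by nlinarith
  have hs_sq : s^2 = R^2 - ε^2 := Real.sq_sqrt hre2
  have hs_nonneg : 0 ≤ s := Real.sqrt_nonneg _
  have hs_le : s ≤ R := by nlinarith
  have hc_lb : (7:ℝ)/8 ≤ c := by
    have := Real.one_sub_sq_div_two_le_cos (x := ε); rw [← hcdef] at this; nlinarith
  have hc_pos : (0:ℝ) < c := by linarith
  have hc_le : c ≤ 1 := Real.cos_le_one ε
  -- Lambert W identity
  have hW : R * Real.exp R = (n:ℝ) + 1 := by
    have hex : ∃ y : ℝ, y * Real.exp y = (n:ℝ) + 1 := by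
      have hmem : (n:ℝ) + 1 ∈ Set.Icc ((0:ℝ) * Real.exp 0) (((n:ℝ)+1) * Real.exp ((n:ℝ)+1)) := by
        constructor
        · simp; positivity
        · have h1 : (1:ℝ) ≤ Real.exp ((n:ℝ)+1) := Real.one_le_exp (by positivity)
          nlinarith [Nat.cast_nonneg (α := ℝ) n]
      have hsub := intermediate_value_Icc (by positivity : (0:ℝ) ≤ (n:ℝ)+1)
        ((continuous_id.mul Real.continuous_exp).continuousOn)
      obtain ⟨y, _, hy⟩ := hsub hmem
      exact ⟨y, hy⟩
    rw [hR]
    unfold lambertW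
    exact Function.invFun_eq hex
  -- pointwise bound on the integrand
  set g : ℝ → ℝ := fun t => 2 / (R^(n+1) * Real.exp s) * (Real.exp t * Real.exp (c * Real.exp t - 1)) with hgdef
  have hpt : ∀ t ∈ Set.uIoc s R,
      ‖Complex.exp (Complex.exp ((t : ℂ) - (ε : ℂ) * Complex.I) - 1) /
              ((t : ℂ) - (ε : ℂ) * Complex.I) ^ (n + 1) -
            Complex.exp (Complex.exp ((t : ℂ) + (ε : ℂ) * Complex.I) - 1) /
              ((t : ℂ) + (ε : ℂ) * Complex.I) ^ (n + 1)‖ ≤ g t := by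
    intro t ht
    rw [Set.uIoc_of_le hs_le] at ht
    have ht2 : R^2 ≤ t^2 + ε^2 := by nlinarith [ht.1, ht.2]
    have hb2 := term_bound n R ε t hRpos ht2
    have hb1 := term_bound n R (-ε) t hRpos (by rw [neg_pow]; simp; nlinarith [ht.1, ht.2])
    rw [Real.cos_neg] at hb1
    have hcast : ((-ε : ℝ) : ℂ) = -(ε : ℂ) := by push_cast; ring
    rw [hcast] at hb1
    have heq : (t:ℂ) + -(ε:ℂ)*Complex.I = (t:ℂ) - (ε:ℂ)*Complex.I := by ring
    rw [heq] at hb1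
    have hsum := norm_sub_le
      (Complex.exp (Complex.exp ((t : ℂ) - (ε : ℂ) * Complex.I) - 1) /
              ((t : ℂ) - (ε : ℂ) * Complex.I) ^ (n + 1))
      (Complex.exp (Complex.exp ((t : ℂ) + (ε : ℂ) * Complex.I) - 1) /
              ((t : ℂ) + (ε : ℂ) * Complex.I) ^ (n + 1))
    have hstep : 2 * Real.exp (Real.exp t * c - 1) / R^(n+1) ≤ g t := by
      have h1 : Real.exp s ≤ Real.exp t := Real.exp_le_exp.mpr ht.1.le
      have hP : (0:ℝ) < R^(n+1) := pow_pos hRpos _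
      show _ ≤ 2 / (R ^ (n + 1) * Real.exp s) * (Real.exp t * Real.exp (c * Real.exp t - 1))
      rw [div_mul_eq_mul_div, div_le_div_iff₀ (by positivity) (by positivity)]
      have hA : (0:ℝ) < Real.exp (Real.exp t * c - 1) := Real.exp_pos _
      rw [show Real.exp t * c - 1 = c * Real.exp t - 1 by ring] at hA ⊢
      nlinarith [mul_le_mul_of_nonneg_left h1 (by positivity : (0:ℝ) ≤ 2 * Real.exp (c * Real.exp t - 1) * R^(n+1))]
    calc _ ≤ _ := hsum
      _ ≤ 2 * Real.exp (Real.exp t * c - 1) / R^(n+1) := by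
          rw [two_mul, add_div]; exact add_le_add hb1 hb2
      _ ≤ g t := hstep
  -- integral bound
  have hgint : IntervalIntegrable g MeasureTheory.volume s R := by
    apply Continuous.intervalIntegrable
    rw [hgdef]
    fun_prop
  have hnorm : ‖∫ t in s..R,
      (Complex.exp (Complex.exp ((t : ℂ) - (ε : ℂ) * Complex.I) - 1) /
              ((t : ℂ) - (ε : ℂ) * Complex.I) ^ (n + 1) -
            Complex.exp (Complex.exp ((t : ℂ) + (ε : ℂ) * Complex.I) - 1) /
              ((t : ℂ) + (ε : ℂ) * Complex.I) ^ (n + 1))‖ ≤ |∫ t in s..R, g t| :=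
    intervalIntegral.norm_integral_le_abs_of_norm_le
      ((MeasureTheory.ae_restrict_iff' measurableSet_uIoc).mpr
        (MeasureTheory.ae_of_all _ hpt)) hgint
  have hint : ∫ t in s..R, g t
      = 2 / (R^(n+1) * Real.exp s) *
        ((Real.exp (c*Real.exp R - 1) - Real.exp (c*Real.exp s - 1))/c) := by
    rw [hgdef, intervalIntegral.integral_const_mul, int_exp c s R hc_pos.ne']
  have hsub_nonneg : Real.exp (c*Real.exp s - 1) ≤ Real.exp (c*Real.exp R - 1) := by
    have := Real.exp_le_exp.mpr hs_le
    apply Real.exp_le_exp.mpr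
    nlinarith
  set Vmax : ℝ := 2 / (R^(n+1) * Real.exp s) * (Real.exp (c*Real.exp R - 1)/c) with hVdef
  have hgabs : |∫ t in s..R, g t| ≤ Vmax := by
    rw [hint, abs_of_nonneg (mul_nonneg (by positivity)
        (div_nonneg (by linarith) hc_pos.le)), hVdef]
    gcongr
    · linarith [Real.exp_pos (c*Real.exp s - 1)]
  -- |J|
  have habs2π : ‖2 * (Real.pi:ℂ) * Complex.I‖ = 2 * Real.pi := by
    simp [Complex.norm_real, abs_of_nonneg Real.pi_pos.le]
  have habsJ : ‖J‖ ≤ (Nat.factorial n : ℝ) / (2 * Real.pi) * Vmax := by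
    rw [hJ, norm_mul, norm_div, Complex.norm_natCast, habs2π]
    exact mul_le_mul_of_nonneg_left (le_trans hnorm hgabs) (by positivity)
  -- E positive
  have hEeq : E n = (Nat.factorial n : ℝ) * Real.exp (Real.exp R - 1) /
      (R ^ n * Real.sqrt (2 * Real.pi * (R * Real.exp R) * (R + 1))) := by
    rw [E, ← hR, ← hW]
  have hQpos : (0:ℝ) < Real.sqrt (2 * Real.pi * (R * Real.exp R) * (R + 1)) :=
    Real.sqrt_pos.mpr (by positivity)
  have hE : (0:ℝ) < E n := by
    rw [hEeq]
    have := Nat.factorial_pos n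
    positivity
  -- key scalar inequality
  have h2s : 0 ≤ 2*s - 2*R + R*ε^2 := by nlinarith [hs_sq, hs_nonneg, hR5]
  have hkey : Real.sqrt (2 * Real.pi * (R * Real.exp R) * (R + 1))
      ≤ Real.pi * c * R * Real.exp (s - R/2 + R*ε^2/2) := by
    have hc2 : (49:ℝ)/64 ≤ c^2 := by nlinarith
    have h1 : (3.141592:ℝ) * (49/64) ≤ Real.pi * c^2 :=
      mul_le_mul hπ.le hc2 (by norm_num) hπpos.le
    have h2 : 2*(R+1) ≤ Real.pi * c^2 * R := by nlinarith
    have hsq : 2 * Real.pi * (R * Real.exp R) * (R + 1)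
        ≤ (Real.pi * c * R * Real.exp (s - R/2 + R*ε^2/2))^2 := by
      have hexp2 : (Real.exp (s - R/2 + R*ε^2/2))^2
          = Real.exp R * Real.exp (2*s - 2*R + R*ε^2) := by
        rw [sq, ← Real.exp_add, ← Real.exp_add]; ring_nf
      have hone : (1:ℝ) ≤ Real.exp (2*s - 2*R + R*ε^2) := Real.one_le_exp h2s
      have hmul := mul_le_mul_of_nonneg_right h2
        (by positivity : (0:ℝ) ≤ Real.pi * R * Real.exp R)
      calc 2 * Real.pi * (R * Real.exp R) * (R + 1)
          = 2*(R+1) * (Real.pi * R * Real.exp R) := by ring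
        _ ≤ Real.pi * c^2 * R * (Real.pi * R * Real.exp R) := hmul
        _ ≤ Real.pi * c^2 * R * (Real.pi * R * Real.exp R) *
              Real.exp (2*s - 2*R + R*ε^2) := by
            nlinarith [Real.exp_pos R, Real.exp_pos (2*s - 2*R + R*ε^2),
              mul_pos (mul_pos (mul_pos hπpos (by positivity : (0:ℝ) < c^2)) hRpos)
                (mul_pos (mul_pos hπpos hRpos) (Real.exp_pos R))]
        _ = (Real.pi * c * R * Real.exp (s - R/2 + R*ε^2/2))^2 := by
            rw [mul_pow, mul_pow, mul_pow, hexp2]; ring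
    calc Real.sqrt (2 * Real.pi * (R * Real.exp R) * (R + 1))
        ≤ Real.sqrt ((Real.pi * c * R * Real.exp (s - R/2 + R*ε^2/2))^2) :=
          Real.sqrt_le_sqrt hsq
      _ = Real.pi * c * R * Real.exp (s - R/2 + R*ε^2/2) :=
          Real.sqrt_sq (by positivity)
  -- assemble
  rw [norm_div, Complex.norm_real, Real.norm_eq_abs, abs_of_pos hE, div_le_iff₀ hE]
  have hid : Real.exp (Real.exp R * (c - 1) - R / 2 * (1 - ε ^ 2)) * E n
      = ((Nat.factorial n : ℝ) / (2 * Real.pi) * Vmax) *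
        ((Real.pi * c * R * Real.exp (s - R/2 + R*ε^2/2)) /
          Real.sqrt (2 * Real.pi * (R * Real.exp R) * (R + 1))) := by
    rw [hEeq, hVdef]
    have e1 : Real.exp (c*Real.exp R - 1)
        = Real.exp (Real.exp R - 1) * Real.exp (Real.exp R * (c - 1)) := by
      rw [← Real.exp_add]; ring_nf
    have e2 : Real.exp (Real.exp R * (c - 1) - R / 2 * (1 - ε ^ 2))
        = Real.exp (Real.exp R * (c - 1)) * (Real.exp (R*ε^2/2) / Real.exp (R/2)) := by
      rw [← Real.exp_sub, ← Real.exp_add]; ring_nf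
    have e3 : Real.exp (s - R/2 + R*ε^2/2)
        = Real.exp s * Real.exp (R*ε^2/2) / Real.exp (R/2) := by
      rw [← Real.exp_add, ← Real.exp_sub]; ring_nf
    rw [e1, e2, e3, pow_succ]
    have hfac : (0:ℝ) < (Nat.factorial n : ℝ) := by exact_mod_cast Nat.factorial_pos n
    field_simp
    ring
  calc ‖J‖ ≤ (Nat.factorial n : ℝ) / (2 * Real.pi) * Vmax := habsJ
    _ ≤ ((Nat.factorial n : ℝ) / (2 * Real.pi) * Vmax) *
        ((Real.pi * c * R * Real.exp (s - R/2 + R*ε^2/2)) /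
          Real.sqrt (2 * Real.pi * (R * Real.exp R) * (R + 1))) := by
        apply le_mul_of_one_le_right
        · have hfac : (0:ℝ) < (Nat.factorial n : ℝ) := by exact_mod_cast Nat.factorial_pos n
          positivity
        · exact (one_le_div hQpos).mpr hkey
    _ = Real.exp (Real.exp R * (c - 1) - R / 2 * (1 - ε ^ 2)) * E n := hid.symm
end
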